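/- Let a > 0, α > 0, κ > 0, C > 0 and 0 ≤ r₀ < R be real numbers, and define P(ρ) = C ∫_{r₀}^{R} γ(a, κ ρ^{−1} r^α) · r dr for ρ > 0. Then lim_{ρ → ∞} log P(ρ) / log ρ = −a. Equivalently, the diversity order −lim_{ρ→∞} log P(ρ)/log ρ equals a. (With a = 2 t_s N this is Proposition 1: the diversity order of user m in the proposed MIMO-IRS network is 2 t_s N.) -/

import Mathlib

open MeasureTheory Filter

/-- Lower incomplete gamma function `γ(a, x) = ∫₀ˣ t^(a-1) e^(-t) dt`. -/
noncomputable def lowerGamma (a x : ℝ) : ℝ := ∫ t in (0:ℝ)..x, t ^ (a - 1) * Real.exp (-t)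

/-- The outage probability as a function of the transmit SNR `ρ`:
`P(ρ) = C ∫_{r₀}^{R} γ(a, κ ρ⁻¹ r^α) r dr`. -/
noncomputable def outageP (C a κ α r₀ R ρ : ℝ) : ℝ :=
  C * ∫ r in r₀..R, lowerGamma a (κ * ρ⁻¹ * r ^ α) * r

open intervalIntegral in
lemma intInt_pow (a x y : ℝ) (ha : 0 < a) :
    IntervalIntegrable (fun t : ℝ => t ^ (a - 1) * Real.exp (-t)) volume x y :=
  (intervalIntegrable_rpow' (by linarith)).mul_continuousOn
    (Continuous.continuousOn (by continuity))

open intervalIntegral in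
lemma int_rpow_eq (a x : ℝ) (ha : 0 < a) :
    ∫ t in (0:ℝ)..x, t ^ (a - 1) = x ^ a / a := by
  rw [integral_rpow (Or.inl (by linarith))]
  rw [sub_add_cancel, Real.zero_rpow ha.ne', sub_zero]

lemma lowerGamma_le (a x : ℝ) (ha : 0 < a) (hx : 0 ≤ x) :
    lowerGamma a x ≤ x ^ a / a := by
  rw [← int_rpow_eq a x ha]
  apply intervalIntegral.integral_mono_on hx (intInt_pow a 0 x ha)
    (intervalIntegral.intervalIntegrable_rpow' (by linarith))
  intro t ht
  have h1 : (0:ℝ) ≤ t ^ (a-1) := Real.rpow_nonneg ht.1 _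
  nlinarith [Real.exp_le_one_iff.mpr (by linarith [ht.1] : -t ≤ 0), Real.exp_pos (-t)]

lemma le_lowerGamma (a x : ℝ) (ha : 0 < a) (hx : 0 ≤ x) (hx1 : x ≤ 1) :
    Real.exp (-1) * (x ^ a / a) ≤ lowerGamma a x := by
  rw [← int_rpow_eq a x ha, ← intervalIntegral.integral_const_mul]
  apply intervalIntegral.integral_mono_on hx
    ((intervalIntegral.intervalIntegrable_rpow' (by linarith)).const_mul _) (intInt_pow a 0 x ha)
  intro t ht
  have h1 : (0:ℝ) ≤ t ^ (a-1) := Real.rpow_nonneg ht.1 _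
  have h2 : Real.exp (-1) ≤ Real.exp (-t) := Real.exp_le_exp.mpr (by linarith [ht.2])
  nlinarith

lemma cont_rpow_const (q : ℝ) (hq : 0 < q) : Continuous (fun x : ℝ => x ^ q) :=
  continuous_iff_continuousAt.mpr fun x => Real.continuousAt_rpow_const x q (Or.inr hq.le)

lemma contOn_lowerGamma (a : ℝ) (ha : 0 < a) :
    ContinuousOn (lowerGamma a) (Set.Icc 0 1) := by
  have h : IntegrableOn (fun t : ℝ => t ^ (a - 1) * Real.exp (-t)) (Set.uIcc 0 1) volume := by
    rw [Set.uIcc_of_le zero_le_one, integrableOn_Icc_iff_integrableOn_Ioc]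
    exact (intInt_pow a 0 1 ha).1
  have h2 := intervalIntegral.continuousOn_primitive_interval h
  simp only [Set.uIcc_of_le (zero_le_one : (0:ℝ) ≤ 1)] at h2
  exact h2

lemma integral_bounds (a α c r₀ R : ℝ) (ha : 0 < a) (hα : 0 < α) (hc : 0 < c)
    (hr₀ : 0 ≤ r₀) (hR : r₀ < R) (hsmall : c * R ^ α ≤ 1) :
    Real.exp (-1) * (c ^ a / a * ∫ r in r₀..R, r ^ (α*a) * r)
      ≤ (∫ r in r₀..R, lowerGamma a (c * r ^ α) * r) ∧
    (∫ r in r₀..R, lowerGamma a (c * r ^ α) * r) ≤ c ^ a / a * ∫ r in r₀..R, r ^ (α*a) * r := by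
  have hmem : ∀ r ∈ Set.Icc r₀ R, 0 ≤ c * r ^ α ∧ c * r ^ α ≤ 1 := by
    intro r hr
    have hr0 : 0 ≤ r := hr₀.trans hr.1
    have h1 : r ^ α ≤ R ^ α := Real.rpow_le_rpow hr0 hr.2 hα.le
    have h2 : 0 ≤ r ^ α := Real.rpow_nonneg hr0 _
    constructor
    · positivity
    · nlinarith
  have hgc : ContinuousOn (fun r : ℝ => lowerGamma a (c * r ^ α) * r) (Set.Icc r₀ R) := by
    apply ContinuousOn.mul _ continuousOn_id
    apply (contOn_lowerGamma a ha).comp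
      ((continuousOn_const.mul ((cont_rpow_const α hα).continuousOn)))
    intro r hr
    exact hmem r hr
  have hgint : IntervalIntegrable (fun r : ℝ => lowerGamma a (c * r ^ α) * r) volume r₀ R := by
    apply ContinuousOn.intervalIntegrable
    rwa [Set.uIcc_of_le hR.le]
  have hbint : IntervalIntegrable (fun r : ℝ => c ^ a / a * (r ^ (α*a) * r)) volume r₀ R :=
    (Continuous.intervalIntegrable (by exact (continuous_const.mul
      ((cont_rpow_const (α*a) (by positivity)).mul continuous_id))) _ _)
  have key : ∀ r ∈ Set.Icc r₀ R,
      (c * r ^ α) ^ a = c ^ a * r ^ (α * a) := by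
    intro r hr
    have hr0 : 0 ≤ r := hr₀.trans hr.1
    rw [Real.mul_rpow hc.le (Real.rpow_nonneg hr0 _), ← Real.rpow_mul hr0]
  constructor
  · rw [← intervalIntegral.integral_const_mul, ← intervalIntegral.integral_const_mul]
    apply intervalIntegral.integral_mono_on hR.le (hbint.const_mul _) hgint
    intro r hr
    have hr0 : 0 ≤ r := hr₀.trans hr.1
    calc Real.exp (-1) * (c ^ a / a * (r ^ (α*a) * r))
        = (Real.exp (-1) * ((c * r ^ α) ^ a / a)) * r := by rw [key r hr]; ring
      _ ≤ lowerGamma a (c * r ^ α) * r :=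
          mul_le_mul_of_nonneg_right (le_lowerGamma a _ ha (hmem r hr).1 (hmem r hr).2) hr0
  · rw [← intervalIntegral.integral_const_mul]
    apply intervalIntegral.integral_mono_on hR.le hgint hbint
    intro r hr
    have hr0 : 0 ≤ r := hr₀.trans hr.1
    calc lowerGamma a (c * r ^ α) * r ≤ ((c * r ^ α) ^ a / a) * r :=
          mul_le_mul_of_nonneg_right (lowerGamma_le a _ ha (hmem r hr).1) hr0
      _ = c ^ a / a * (r ^ (α*a) * r) := by rw [key r hr]; ring

theorem stmt_3 (a α κ C r₀ R : ℝ) (ha : 0 < a) (hα : 0 < α) (hκ : 0 < κ) (hC : 0 < C)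
    (hr₀ : 0 ≤ r₀) (hR : r₀ < R) :
    Tendsto (fun ρ : ℝ => Real.log (outageP C a κ α r₀ R ρ) / Real.log ρ)
      atTop (nhds (-a)) := by
  set J : ℝ := ∫ r in r₀..R, r ^ (α*a) * r with hJdef
  have hJ : 0 < J := by
    apply intervalIntegral.intervalIntegral_pos_of_pos_on _ _ hR
    · exact Continuous.intervalIntegrable
        ((cont_rpow_const (α*a) (by positivity)).mul continuous_id) _ _
    · intro r hr
      have hr0 : 0 < r := lt_of_le_of_lt hr₀ hr.1
      exact mul_pos (Real.rpow_pos_of_pos hr0 _) hr0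
  set D : ℝ := C * (κ ^ a / a * J) with hDdef
  have hD : 0 < D := by
    have := Real.rpow_pos_of_pos hκ a
    positivity
  have hR0 : 0 < R := lt_of_le_of_lt hr₀ hR
  have hRα : 0 < R ^ α := Real.rpow_pos_of_pos hR0 _
  -- the two bounding functions
  have h0 : Tendsto (fun ρ : ℝ => (Real.log ρ)⁻¹) atTop (nhds 0) :=
    Real.tendsto_log_atTop.inv_tendsto_atTop
  have hlo : Tendsto (fun ρ : ℝ => (Real.log D - 1) * (Real.log ρ)⁻¹ + (-a)) atTop (nhds (-a)) := by
    have := (h0.const_mul (Real.log D - 1)).add_const (-a)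
    simpa using this
  have hhi : Tendsto (fun ρ : ℝ => Real.log D * (Real.log ρ)⁻¹ + (-a)) atTop (nhds (-a)) := by
    have := (h0.const_mul (Real.log D)).add_const (-a)
    simpa using this
  have key : ∀ ρ : ℝ, max 2 (κ * R ^ α) ≤ ρ →
      (Real.log D - 1) * (Real.log ρ)⁻¹ + (-a)
        ≤ Real.log (outageP C a κ α r₀ R ρ) / Real.log ρ ∧
      Real.log (outageP C a κ α r₀ R ρ) / Real.log ρ
        ≤ Real.log D * (Real.log ρ)⁻¹ + (-a) := by
    intro ρ hρ
    have hρ2 : (2:ℝ) ≤ ρ := le_trans (le_max_left _ _) hρ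
    have hρ0 : 0 < ρ := by linarith
    have hρ1 : 1 < ρ := by linarith
    have hlog : 0 < Real.log ρ := Real.log_pos hρ1
    set c : ℝ := κ * ρ⁻¹ with hcdef
    have hc : 0 < c := by positivity
    have hsmall : c * R ^ α ≤ 1 := by
      have h1 : κ * R ^ α ≤ ρ := le_trans (le_max_right _ _) hρ
      rw [hcdef]
      rw [show κ * ρ⁻¹ * R ^ α = (κ * R ^ α) / ρ by ring]
      exact (div_le_one hρ0).mpr h1
    obtain ⟨hlb, hub⟩ := integral_bounds a α c r₀ R ha hα hc hr₀ hR hsmall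
    have hca : c ^ a = κ ^ a * ρ ^ (-a) := by
      rw [hcdef, Real.mul_rpow hκ.le (by positivity), Real.inv_rpow hρ0.le,
        ← Real.rpow_neg hρ0.le]
    have hρa : 0 < ρ ^ (-a) := Real.rpow_pos_of_pos hρ0 _
    have hUval : C * (c ^ a / a * J) = D * ρ ^ (-a) := by
      rw [hca, hDdef]; ring
    have hub' : outageP C a κ α r₀ R ρ ≤ D * ρ ^ (-a) := by
      rw [outageP, ← hUval]
      exact mul_le_mul_of_nonneg_left hub hC.le
    have hlb' : Real.exp (-1) * (D * ρ ^ (-a)) ≤ outageP C a κ α r₀ R ρ := by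
      rw [outageP, ← hUval]
      calc Real.exp (-1) * (C * (c ^ a / a * J))
          = C * (Real.exp (-1) * (c ^ a / a * J)) := by ring
        _ ≤ _ := mul_le_mul_of_nonneg_left hlb hC.le
    have hLpos : 0 < Real.exp (-1) * (D * ρ ^ (-a)) := by positivity
    have hPpos : 0 < outageP C a κ α r₀ R ρ := lt_of_lt_of_le hLpos hlb'
    have hlogU : Real.log (D * ρ ^ (-a)) = Real.log D + (-a) * Real.log ρ := by
      rw [Real.log_mul hD.ne' hρa.ne', Real.log_rpow hρ0]
    have hlogL : Real.log (Real.exp (-1) * (D * ρ ^ (-a)))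
        = -1 + (Real.log D + (-a) * Real.log ρ) := by
      rw [Real.log_mul (Real.exp_ne_zero _) (by positivity), Real.log_exp, hlogU]
    constructor
    · calc (Real.log D - 1) * (Real.log ρ)⁻¹ + (-a)
          = (-1 + (Real.log D + (-a) * Real.log ρ)) / Real.log ρ := by
            field_simp; ring
        _ = Real.log (Real.exp (-1) * (D * ρ ^ (-a))) / Real.log ρ := by rw [hlogL]
        _ ≤ Real.log (outageP C a κ α r₀ R ρ) / Real.log ρ := by
            gcongr
    · calc Real.log (outageP C a κ α r₀ R ρ) / Real.log ρ
          ≤ Real.log (D * ρ ^ (-a)) / Real.log ρ := by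
            gcongr
        _ = Real.log D * (Real.log ρ)⁻¹ + (-a) := by
            rw [hlogU]; field_simp
  refine tendsto_of_tendsto_of_tendsto_of_le_of_le' hlo hhi ?_ ?_
  · filter_upwards [eventually_ge_atTop (max 2 (κ * R ^ α))] with ρ hρ
    exact (key ρ hρ).1
  · filter_upwards [eventually_ge_atTop (max 2 (κ * R ^ α))] with ρ hρ
    exact (key ρ hρ).2
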